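/- Let A be a residuated lattice. The following are equivalent: (1) for any two ω-filters G, H of A, if the supremum of G and H in the lattice of ω-filters equals A (i.e. ω(K) = A where K is the lattice ideal generated by I_G ∪ I_H for ideals I_G, I_H with G = ω(I_G), H = ω(I_H)), then G ∨ H = A in the lattice of filters; (2) A is normal; (3) for any family 𝔉 of ω-filters of A, the join ⋁𝔉 in the lattice of filters is an ω-filter; (4) the set of ω-filters is a sublattice of the lattice of filters of A (closed under binary filter join); (5) the set of coannulets {x^⊥ | x ∈ A} is a sublattice of the lattice of filters of A (closed under binary filter join). -/

import Mathlib

class ResiduatedLattice (α : Type*) extends Lattice α, CommMonoid α, BoundedOrder α where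
  rimp : α → α → α
  one_eq_top : (1 : α) = ⊤
  adjunction : ∀ x y z : α, x * y ≤ z ↔ x ≤ rimp y z

variable {α : Type*} [ResiduatedLattice α]

/-- A filter of a residuated lattice: nonempty, closed under `⊙` and upward closed. -/
def IsFilter (F : Set α) : Prop :=
  F.Nonempty ∧ (∀ x ∈ F, ∀ y ∈ F, x * y ∈ F) ∧ ∀ x ∈ F, ∀ y : α, x ≤ y → y ∈ F

/-- A prime filter: a proper filter such that `x ⊔ y ∈ P` implies `x ∈ P` or `y ∈ P`. -/
def IsPrimeFilter (P : Set α) : Prop :=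
  IsFilter P ∧ P ≠ Set.univ ∧ ∀ x y : α, x ⊔ y ∈ P → x ∈ P ∨ y ∈ P

/-- A `∨`-closed subset: nonempty and closed under join. -/
def IsJoinClosed (C : Set α) : Prop :=
  C.Nonempty ∧ ∀ x ∈ C, ∀ y ∈ C, x ⊔ y ∈ C

/-- The filter generated by a set. -/
def filterGen (X : Set α) : Set α := ⋂₀ {G : Set α | IsFilter G ∧ X ⊆ G}

/-- An `X`-minimal prime filter: prime, contains `X`, minimal among primes containing `X`. -/
def IsMinPrimeOver (X P : Set α) : Prop :=
  IsPrimeFilter P ∧ X ⊆ P ∧ ∀ Q : Set α, IsPrimeFilter Q → X ⊆ Q → Q ⊆ P → Q = P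

/-- `ω_F(X) = {a | x ∨ a ∈ F for some x ∈ X}`. -/
def omegaF (F X : Set α) : Set α := {a : α | ∃ x ∈ X, x ⊔ a ∈ F}

/-- The coannihilator `(F : x) = {a | x ∨ a ∈ F}`. -/
def coann (F : Set α) (x : α) : Set α := {a : α | x ⊔ a ∈ F}

/-- `D_F(H) = {a | x ∨ a ∈ F for some x ∉ H}`, the set of `F`-divisors of `H`. -/
def divisorsF (F H : Set α) : Set α := {a : α | ∃ x ∉ H, x ⊔ a ∈ F}

/-- A lattice ideal: nonempty, closed under join and downward closed. -/
def IsLatticeIdeal (I : Set α) : Prop :=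
  I.Nonempty ∧ (∀ x ∈ I, ∀ y ∈ I, x ⊔ y ∈ I) ∧ ∀ x y : α, x ≤ y → y ∈ I → x ∈ I

/-- The lattice ideal generated by a set. -/
def idealGen (X : Set α) : Set α := ⋂₀ {I : Set α | IsLatticeIdeal I ∧ X ⊆ I}

/-- An `ω_F`-filter: a filter of the form `ω_F(I)` for some lattice ideal `I`. -/
def IsOmegaFilter (F H : Set α) : Prop :=
  IsFilter H ∧ ∃ I : Set α, IsLatticeIdeal I ∧ H = omegaF F I

/-- A minimal prime filter: a prime filter minimal among all prime filters. -/
def IsMinPrime (P : Set α) : Prop :=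
  IsPrimeFilter P ∧ ∀ Q : Set α, IsPrimeFilter Q → Q ⊆ P → Q = P

/-- The coannulet `x^⊥ = {a | x ∨ a = 1}`. -/
def coannulet (x : α) : Set α := {a : α | x ⊔ a = ⊤}

/-- `ω(X) = {a | x ∨ a = 1 for some x ∈ X}`. -/
def omegaU (X : Set α) : Set α := {a : α | ∃ x ∈ X, x ⊔ a = ⊤}

/-- An `ω`-filter: a filter of the form `ω(I)` for some lattice ideal `I`. -/
def IsOmegaF (H : Set α) : Prop :=
  IsFilter H ∧ ∃ I : Set α, IsLatticeIdeal I ∧ H = omegaU I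

/-- `A` is normal: every prime filter contains exactly one minimal prime filter. -/
def IsNormalRL (α : Type*) [ResiduatedLattice α] : Prop :=
  ∀ P : Set α, IsPrimeFilter P → ∃! m : Set α, IsMinPrime m ∧ m ⊆ P
section RLAux
variable {α : Type*} [ResiduatedLattice α]

open ResiduatedLattice

lemma rl_mul_le_mul_left (a : α) {b c : α} (h : b ≤ c) : a * b ≤ a * c := by
  have h1 : c ≤ rimp a (a * c) := (adjunction c a (a * c)).1 (le_of_eq (mul_comm c a))
  have h2 : b * a ≤ a * c := (adjunction b a (a * c)).2 (le_trans h h1)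
  calc a * b = b * a := mul_comm a b
    _ ≤ a * c := h2

lemma rl_one_le_top : ∀ b : α, b ≤ 1 := by
  intro b; rw [one_eq_top]; exact le_top

lemma rl_mul_le_left (a b : α) : a * b ≤ a := by
  have := rl_mul_le_mul_left a (rl_one_le_top b)
  rwa [mul_one] at this

lemma rl_mul_le_right (a b : α) : a * b ≤ b := by
  rw [mul_comm]; exact rl_mul_le_left b a

lemma rl_mul_le_mul {a b c d : α} (h1 : a ≤ b) (h2 : c ≤ d) : a * c ≤ b * d := by
  calc a * c ≤ a * d := rl_mul_le_mul_left a h2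
    _ = d * a := mul_comm a d
    _ ≤ d * b := rl_mul_le_mul_left d h1
    _ = b * d := mul_comm d b

lemma rl_mul_sup (a b c : α) : a * (b ⊔ c) = a * b ⊔ a * c := by
  apply le_antisymm
  · have hb : b ≤ rimp a (a * b ⊔ a * c) :=
      (adjunction b a _).1 (le_trans (le_of_eq (mul_comm b a)) le_sup_left)
    have hc : c ≤ rimp a (a * b ⊔ a * c) :=
      (adjunction c a _).1 (le_trans (le_of_eq (mul_comm c a)) le_sup_right)
    have := (adjunction (b ⊔ c) a _).2 (sup_le hb hc)
    calc a * (b ⊔ c) = (b ⊔ c) * a := mul_comm _ _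
      _ ≤ a * b ⊔ a * c := this
  · exact sup_le (rl_mul_le_mul_left a le_sup_left) (rl_mul_le_mul_left a le_sup_right)

lemma rl_sup_mul (a b c : α) : (a ⊔ b) * c = a * c ⊔ b * c := by
  rw [mul_comm, rl_mul_sup, mul_comm c a, mul_comm c b]

lemma rl_sup_mul_sup_le (x a b : α) : (x ⊔ a) * (x ⊔ b) ≤ x ⊔ a * b := by
  rw [rl_mul_sup]
  apply sup_le
  · exact le_trans (rl_mul_le_right _ _) le_sup_left
  · rw [rl_sup_mul]
    exact sup_le (le_trans (rl_mul_le_left _ _) le_sup_left)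
      (le_sup_right)

lemma rl_top_mul_top : (⊤ : α) * ⊤ = ⊤ := by
  rw [← one_eq_top (α := α), mul_one]

/-- if `x ⊔ a = ⊤` and `x ⊔ b = ⊤` then `x ⊔ a*b = ⊤`. -/
lemma coann_mul {x a b : α} (ha : x ⊔ a = ⊤) (hb : x ⊔ b = ⊤) : x ⊔ a * b = ⊤ := by
  apply top_unique
  calc (⊤ : α) = (x ⊔ a) * (x ⊔ b) := by rw [ha, hb, rl_top_mul_top]
    _ ≤ x ⊔ a * b := rl_sup_mul_sup_le x a b

lemma filter_top_mem {F : Set α} (hF : IsFilter F) : ⊤ ∈ F := by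
  obtain ⟨⟨x, hx⟩, _, hup⟩ := hF
  exact hup x hx ⊤ le_top

lemma filter_one_mem {F : Set α} (hF : IsFilter F) : (1 : α) ∈ F := by
  rw [one_eq_top]; exact filter_top_mem hF

lemma filter_univ : IsFilter (Set.univ : Set α) :=
  ⟨⟨⊤, trivial⟩, fun _ _ _ _ => trivial, fun _ _ _ _ => trivial⟩

lemma filter_proper_bot {F : Set α} (hF : IsFilter F) (h : F ≠ Set.univ) : ⊥ ∉ F := by
  intro hb
  exact h (Set.eq_univ_iff_forall.2 fun c => hF.2.2 ⊥ hb c bot_le)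

lemma filterGen_isFilter (X : Set α) : IsFilter (filterGen X) := by
  refine ⟨⟨⊤, ?_⟩, ?_, ?_⟩
  · exact fun F hF => filter_top_mem hF.1
  · intro a ha b hb F hF
    exact hF.1.2.1 a (ha F hF) b (hb F hF)
  · intro a ha b hab F hF
    exact hF.1.2.2 a (ha F hF) b hab

lemma subset_filterGen (X : Set α) : X ⊆ filterGen X :=
  fun a ha F hF => hF.2 ha

lemma filterGen_subset {X F : Set α} (hF : IsFilter F) (hXF : X ⊆ F) : filterGen X ⊆ F :=
  fun a ha => ha F ⟨hF, hXF⟩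

lemma idealGen_subset {X K : Set α} (hK : IsLatticeIdeal K) (hXK : X ⊆ K) : idealGen X ⊆ K :=
  fun a ha => ha K ⟨hK, hXK⟩

lemma omega_isFilter {I : Set α} (hI : IsLatticeIdeal I) : IsFilter (omegaU I) := by
  obtain ⟨⟨i0, hi0⟩, hjoin, hdown⟩ := hI
  refine ⟨⟨⊤, i0, hi0, sup_top_eq i0⟩, ?_, ?_⟩
  · rintro a ⟨u, hu, hua⟩ b ⟨v, hv, hvb⟩
    refine ⟨u ⊔ v, hjoin u hu v hv, ?_⟩
    have h1 : (u ⊔ v) ⊔ a = ⊤ :=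
      top_unique (by rw [← hua]; exact sup_le_sup_right le_sup_left a)
    have h2 : (u ⊔ v) ⊔ b = ⊤ :=
      top_unique (by rw [← hvb]; exact sup_le_sup_right le_sup_right b)
    exact coann_mul h1 h2
  · rintro a ⟨u, hu, hua⟩ b hab
    exact ⟨u, hu, top_unique (by rw [← hua]; exact sup_le_sup_left hab u)⟩

lemma principal_ideal (x : α) : IsLatticeIdeal {a : α | a ≤ x} :=
  ⟨⟨x, le_refl x⟩, fun a ha b hb => sup_le ha hb, fun a b hab hb => le_trans hab hb⟩

lemma coannulet_eq_omega (x : α) : coannulet x = omegaU {a : α | a ≤ x} := by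
  ext a
  constructor
  · intro h; exact ⟨x, le_refl x, h⟩
  · rintro ⟨b, hb, hba⟩
    exact top_unique (by rw [← hba]; exact sup_le_sup_right hb a)

lemma coannulet_filter (x : α) : IsFilter (coannulet x) := by
  rw [coannulet_eq_omega]; exact omega_isFilter (principal_ideal x)

lemma coannulet_omegaF (x : α) : IsOmegaF (coannulet x) :=
  ⟨coannulet_filter x, {a | a ≤ x}, principal_ideal x, coannulet_eq_omega x⟩

end RLAux
section RLAux2
variable {α : Type*} [ResiduatedLattice α]

open ResiduatedLattice

lemma filter_pow_mem {F : Set α} (hF : IsFilter F) {a : α} (ha : a ∈ F) :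
    ∀ n : ℕ, a ^ n ∈ F
  | 0 => by rw [pow_zero]; exact filter_one_mem hF
  | n + 1 => by rw [pow_succ]; exact hF.2.1 _ (filter_pow_mem hF ha n) _ ha

lemma rl_pow_sup_le : ∀ N n k : ℕ, n + k ≤ N → ∀ c d t x y : α,
    c * x ^ n ≤ t → d * y ^ k ≤ t → (c * d) * (x ⊔ y) ^ (n + k) ≤ t := by
  intro N
  induction N with
  | zero =>
    intro n k hnk c d t x y hc hd
    have hn : n = 0 := by omega
    have hk : k = 0 := by omega
    subst hn; subst hk
    rw [pow_zero, mul_one] at hc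
    calc (c * d) * (x ⊔ y) ^ (0 + 0) ≤ c * d := rl_mul_le_left _ _
      _ ≤ c := rl_mul_le_left _ _
      _ ≤ t := hc
  | succ N ih =>
    intro n k hnk c d t x y hc hd
    cases n with
    | zero =>
      rw [pow_zero, mul_one] at hc
      calc (c * d) * (x ⊔ y) ^ (0 + k) ≤ c * d := rl_mul_le_left _ _
        _ ≤ c := rl_mul_le_left _ _
        _ ≤ t := hc
    | succ n =>
      cases k with
      | zero =>
        rw [pow_zero, mul_one] at hd
        calc (c * d) * (x ⊔ y) ^ (n + 1 + 0) ≤ c * d := rl_mul_le_left _ _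
          _ ≤ d := rl_mul_le_right _ _
          _ ≤ t := hd
      | succ k =>
        have epow : (n + 1) + (k + 1) = (n + k + 1) + 1 := by omega
        rw [epow, pow_succ]
        have eq1 : (c * d) * ((x ⊔ y) ^ (n + k + 1) * (x ⊔ y)) =
            ((c * d) * (x ⊔ y)) * (x ⊔ y) ^ (n + k + 1) := by ac_rfl
        rw [eq1, rl_mul_sup, rl_sup_mul]
        apply sup_le
        · have h1 : (c * x) * x ^ n ≤ t := by
            have e : (c * x) * x ^ n = c * x ^ (n + 1) := by rw [pow_succ]; ac_rfl
            rw [e]; exact hc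
          have h2 := ih n (k + 1) (by omega) (c * x) d t x y h1 hd
          have e2 : ((c * d) * x) * (x ⊔ y) ^ (n + k + 1) =
              ((c * x) * d) * (x ⊔ y) ^ (n + (k + 1)) := by
            rw [show n + (k + 1) = n + k + 1 from by omega]; ac_rfl
          rw [e2]; exact h2
        · have h1 : (d * y) * y ^ k ≤ t := by
            have e : (d * y) * y ^ k = d * y ^ (k + 1) := by rw [pow_succ]; ac_rfl
            rw [e]; exact hd
          have h2 := ih (n + 1) k (by omega) c (d * y) t x y hc h1
          have e2 : ((c * d) * y) * (x ⊔ y) ^ (n + k + 1) =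
              (c * (d * y)) * (x ⊔ y) ^ ((n + 1) + k) := by
            rw [show (n + 1) + k = n + k + 1 from by omega]; ac_rfl
          rw [e2]; exact h2

/-- the filter generated by two coannulets, explicitly. -/
def genTwo (x y : α) : Set α := {c : α | ∃ a b : α, x ⊔ a = ⊤ ∧ y ⊔ b = ⊤ ∧ a * b ≤ c}

lemma genTwo_filter (x y : α) : IsFilter (genTwo x y) := by
  refine ⟨⟨⊤, ⊤, ⊤, sup_top_eq x, sup_top_eq y, le_top⟩, ?_, ?_⟩
  · rintro c ⟨a, b, ha, hb, hab⟩ c' ⟨a', b', ha', hb', hab'⟩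
    refine ⟨a * a', b * b', coann_mul ha ha', coann_mul hb hb', ?_⟩
    have e : (a * a') * (b * b') = (a * b) * (a' * b') := by ac_rfl
    rw [e]
    exact rl_mul_le_mul hab hab'
  · rintro c ⟨a, b, ha, hb, hab⟩ c' hcc'
    exact ⟨a, b, ha, hb, le_trans hab hcc'⟩

lemma coannulet_subset_genTwo_left (x y : α) : coannulet x ⊆ genTwo x y := by
  intro a ha
  exact ⟨a, ⊤, ha, sup_top_eq y, by rw [← one_eq_top (α := α), mul_one]⟩

lemma coannulet_subset_genTwo_right (x y : α) : coannulet y ⊆ genTwo x y := by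
  intro b hb
  refine ⟨⊤, b, sup_top_eq x, hb, ?_⟩
  rw [mul_comm, ← one_eq_top (α := α), mul_one]

lemma filterGen_coann_subset (x y : α) :
    filterGen (coannulet x ∪ coannulet y) ⊆ genTwo x y :=
  filterGen_subset (genTwo_filter x y)
    (Set.union_subset (coannulet_subset_genTwo_left x y) (coannulet_subset_genTwo_right x y))

lemma extract_of_bot_mem {x y : α}
    (h : ⊥ ∈ filterGen (coannulet x ∪ coannulet y)) :
    ∃ a b : α, x ⊔ a = ⊤ ∧ y ⊔ b = ⊤ ∧ a * b = ⊥ := by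
  obtain ⟨a, b, ha, hb, hab⟩ := filterGen_coann_subset x y h
  exact ⟨a, b, ha, hb, le_bot_iff.1 hab⟩

/-- The property N: the algebraic core of normality. -/
def propN (α : Type*) [ResiduatedLattice α] : Prop :=
  ∀ x y : α, x ⊔ y = ⊤ → ∃ a b : α, x ⊔ a = ⊤ ∧ y ⊔ b = ⊤ ∧ a * b = ⊥

end RLAux2
section RLAux3
variable {α : Type*} [ResiduatedLattice α]

open ResiduatedLattice

/-- the filter generated by a filter `M` and one more element `a`. -/
def gen1 (M : Set α) (a : α) : Set α := {c : α | ∃ m ∈ M, ∃ n : ℕ, m * a ^ n ≤ c}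

lemma gen1_filter {M : Set α} (hM : IsFilter M) (a : α) : IsFilter (gen1 M a) := by
  refine ⟨⟨⊤, ⊤, filter_top_mem hM, 0, le_top⟩, ?_, ?_⟩
  · rintro c ⟨m, hm, n, hmn⟩ c' ⟨m', hm', n', hmn'⟩
    refine ⟨m * m', hM.2.1 m hm m' hm', n + n', ?_⟩
    have e : (m * m') * a ^ (n + n') = (m * a ^ n) * (m' * a ^ n') := by
      rw [pow_add]; ac_rfl
    rw [e]
    exact rl_mul_le_mul hmn hmn'
  · rintro c ⟨m, hm, n, hmn⟩ c' hcc'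
    exact ⟨m, hm, n, le_trans hmn hcc'⟩

lemma subset_gen1 {M : Set α} (hM : IsFilter M) (a : α) : M ⊆ gen1 M a := by
  intro m hm
  exact ⟨m, hm, 0, by rw [pow_zero, mul_one]⟩

lemma mem_gen1 {M : Set α} (hM : IsFilter M) (a : α) : a ∈ gen1 M a :=
  ⟨1, filter_one_mem hM, 1, by rw [pow_one, one_mul]⟩

/-- Zorn: a filter disjoint from a join-closed set extends to a prime filter disjoint from it. -/
lemma exists_prime_disjoint {F D : Set α} (hF : IsFilter F) (hD : IsJoinClosed D)
    (hdisj : ∀ a ∈ F, a ∉ D) :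
    ∃ P : Set α, IsPrimeFilter P ∧ F ⊆ P ∧ ∀ a ∈ P, a ∉ D := by
  set S : Set (Set α) := {G : Set α | IsFilter G ∧ ∀ a ∈ G, a ∉ D} with hS
  have hzorn : ∀ c ⊆ S, IsChain (· ⊆ ·) c → c.Nonempty → ∃ ub ∈ S, ∀ s ∈ c, s ⊆ ub := by
    intro c hcS hchain hne
    obtain ⟨G0, hG0⟩ := hne
    refine ⟨⋃₀ c, ⟨⟨?_, ?_, ?_⟩, ?_⟩, fun s hs => Set.subset_sUnion_of_mem hs⟩
    · exact ⟨⊤, G0, hG0, filter_top_mem (hcS hG0).1⟩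
    · rintro a ⟨G1, hG1, haG1⟩ b ⟨G2, hG2, hbG2⟩
      rcases hchain.total hG1 hG2 with h12 | h21
      · exact ⟨G2, hG2, (hcS hG2).1.2.1 a (h12 haG1) b hbG2⟩
      · exact ⟨G1, hG1, (hcS hG1).1.2.1 a haG1 b (h21 hbG2)⟩
    · rintro a ⟨G1, hG1, haG1⟩ b hab
      exact ⟨G1, hG1, (hcS hG1).1.2.2 a haG1 b hab⟩
    · rintro a ⟨G1, hG1, haG1⟩
      exact (hcS hG1).2 a haG1
  obtain ⟨M, hFM, hMmax⟩ := zorn_subset_nonempty S hzorn F ⟨hF, hdisj⟩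
  obtain ⟨hMfil, hMdisj⟩ := hMmax.prop
  obtain ⟨d0, hd0⟩ := hD.1
  refine ⟨M, ⟨hMfil, ?_, ?_⟩, hFM, hMdisj⟩
  · intro huniv
    exact hMdisj d0 (huniv ▸ trivial) hd0
  · -- primality
    intro a b hab
    by_contra hcon
    push_neg at hcon
    obtain ⟨haM, hbM⟩ := hcon
    have key : ∀ z : α, z ∉ M → ∃ d ∈ D, ∃ m ∈ M, ∃ n : ℕ, m * z ^ n ≤ d := by
      intro z hz
      by_contra hno
      push_neg at hno
      have hGz : gen1 M z ∈ S := by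
        refine ⟨gen1_filter hMfil z, ?_⟩
        rintro c ⟨m, hm, n, hmn⟩ hcD
        exact hno c hcD m hm n hmn
      have := hMmax.2 hGz (subset_gen1 hMfil z)
      exact hz (this (mem_gen1 hMfil z))
    obtain ⟨d1, hd1D, m1, hm1, n1, hle1⟩ := key a haM
    obtain ⟨d2, hd2D, m2, hm2, n2, hle2⟩ := key b hbM
    have hle1' : m1 * a ^ n1 ≤ d1 ⊔ d2 := le_trans hle1 le_sup_left
    have hle2' : m2 * b ^ n2 ≤ d1 ⊔ d2 := le_trans hle2 le_sup_right
    have hkey := rl_pow_sup_le (n1 + n2) n1 n2 le_rfl m1 m2 (d1 ⊔ d2) a b hle1' hle2'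
    have hmemM : (m1 * m2) * (a ⊔ b) ^ (n1 + n2) ∈ M :=
      hMfil.2.1 _ (hMfil.2.1 m1 hm1 m2 hm2) _ (filter_pow_mem hMfil hab (n1 + n2))
    have hsupM : d1 ⊔ d2 ∈ M := hMfil.2.2 _ hmemM _ hkey
    exact hMdisj _ hsupM (hD.2 d1 hd1D d2 hd2D)

/-- every proper filter extends to a prime filter. -/
lemma exists_prime_over {F : Set α} (hF : IsFilter F) (hprop : F ≠ Set.univ) :
    ∃ P : Set α, IsPrimeFilter P ∧ F ⊆ P := by
  have hbD : IsJoinClosed ({⊥} : Set α) :=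
    ⟨⟨⊥, rfl⟩, by rintro x rfl y rfl; simp⟩
  have hdisj : ∀ a ∈ F, a ∉ ({⊥} : Set α) := by
    rintro a ha rfl
    exact filter_proper_bot hF hprop ha
  obtain ⟨P, hP, hFP, _⟩ := exists_prime_disjoint hF hbD hdisj
  exact ⟨P, hP, hFP⟩

/-- every prime filter contains a minimal prime filter. -/
lemma exists_minPrime_below {P : Set α} (hP : IsPrimeFilter P) :
    ∃ m : Set α, IsMinPrime m ∧ m ⊆ P := by
  set S : Set (Set α) := {Q : Set α | IsPrimeFilter Q ∧ Q ⊆ P} with hS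
  have hzorn : ∀ c ⊆ S, IsChain (· ⊆ ·) c → c.Nonempty → ∃ lb ∈ S, ∀ s ∈ c, lb ⊆ s := by
    intro c hcS hchain hne
    obtain ⟨Q0, hQ0⟩ := hne
    refine ⟨⋂₀ c, ⟨⟨⟨⟨⊤, ?_⟩, ?_, ?_⟩, ?_, ?_⟩, ?_⟩, fun s hs => Set.sInter_subset_of_mem hs⟩
    · exact fun Q hQ => filter_top_mem (hcS hQ).1.1
    · intro a ha b hb Q hQ
      exact (hcS hQ).1.1.2.1 a (ha Q hQ) b (hb Q hQ)
    · intro a ha b hab Q hQ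
      exact (hcS hQ).1.1.2.2 a (ha Q hQ) b hab
    · intro huniv
      have : Q0 = Set.univ :=
        Set.eq_univ_of_univ_subset (huniv ▸ Set.sInter_subset_of_mem hQ0)
      exact (hcS hQ0).1.2.1 this
    · intro x y hxy
      by_contra hcon
      push_neg at hcon
      obtain ⟨hx, hy⟩ := hcon
      rw [Set.mem_sInter] at hx hy
      push_neg at hx hy
      obtain ⟨Q1, hQ1, hxQ1⟩ := hx
      obtain ⟨Q2, hQ2, hyQ2⟩ := hy
      rcases hchain.total hQ1 hQ2 with h12 | h21
      · rcases (hcS hQ1).1.2.2 x y (hxy Q1 hQ1) with h | h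
        · exact hxQ1 h
        · exact hyQ2 (h12 h)
      · rcases (hcS hQ2).1.2.2 x y (hxy Q2 hQ2) with h | h
        · exact hxQ1 (h21 h)
        · exact hyQ2 h
    · exact (Set.sInter_subset_of_mem hQ0).trans (hcS hQ0).2
  obtain ⟨m, hmP, hmin⟩ := zorn_superset_nonempty S hzorn P ⟨hP, le_refl P⟩
  refine ⟨m, ⟨hmin.prop.1, ?_⟩, hmin.prop.2⟩
  intro Q hQ hQm
  exact subset_antisymm hQm (hmin.2 ⟨hQ, hQm.trans hmin.prop.2⟩ hQm)

end RLAux3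
section RLAux4
variable {α : Type*} [ResiduatedLattice α]

open ResiduatedLattice

lemma prime_compl_nonempty {P : Set α} (hP : IsPrimeFilter P) : ∃ d, d ∉ P := by
  by_contra h
  push_neg at h
  exact hP.2.1 (Set.eq_univ_iff_forall.2 h)

/-- if `x ∈ P` is prime and `x ⊔ d ≠ ⊤` for all `d ∉ P`, there is a prime `Q ⊆ P` avoiding `x`. -/
lemma exists_prime_avoiding {P : Set α} (hP : IsPrimeFilter P) {x : α} (hxP : x ∈ P)
    (hx : ∀ d, d ∉ P → x ⊔ d ≠ ⊤) :
    ∃ Q : Set α, IsPrimeFilter Q ∧ Q ⊆ P ∧ x ∉ Q := by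
  set D : Set α := {a : α | a = x ∨ a ∉ P ∨ ∃ d, d ∉ P ∧ a = x ⊔ d} with hD
  have hDx : x ∈ D := Or.inl rfl
  have hDcompl : ∀ a, a ∉ P → a ∈ D := fun a ha => Or.inr (Or.inl ha)
  have hnotP : ∀ a b : α, a ∉ P → b ∉ P → a ⊔ b ∉ P := by
    intro a b ha hb h
    rcases hP.2.2 a b h with h' | h'
    exacts [ha h', hb h']
  have hDjc : IsJoinClosed D := by
    refine ⟨⟨x, hDx⟩, ?_⟩
    rintro a (ha | ha | ⟨d, hd, hda⟩) b (hb | hb | ⟨e, he, heb⟩)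
    · exact Or.inl (by rw [ha, hb, sup_idem])
    · exact Or.inr (Or.inr ⟨b, hb, by rw [ha]⟩)
    · exact Or.inr (Or.inr ⟨e, he, by rw [ha, heb, ← sup_assoc, sup_idem]⟩)
    · exact Or.inr (Or.inr ⟨a, ha, by rw [hb, sup_comm]⟩)
    · exact Or.inr (Or.inl (hnotP a b ha hb))
    · exact Or.inr (Or.inr ⟨a ⊔ e, hnotP a e ha he, by rw [heb, sup_left_comm]⟩)
    · exact Or.inr (Or.inr ⟨d, hd, by rw [hda, hb, sup_comm, ← sup_assoc, sup_idem]⟩)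
    · exact Or.inr (Or.inr ⟨d ⊔ b, hnotP d b hd hb, by rw [hda, sup_assoc]⟩)
    · exact Or.inr (Or.inr ⟨d ⊔ e, hnotP d e hd he, by rw [hda, heb, sup_sup_sup_comm, sup_idem]⟩)
  have hxne : x ≠ ⊤ := by
    intro hxt
    obtain ⟨d, hd⟩ := prime_compl_nonempty hP
    exact hx d hd (by rw [hxt, top_sup_eq])
  have htopD : (⊤ : α) ∉ D := by
    rintro (h | h | ⟨d, hd, h⟩)
    · exact hxne h.symm
    · exact h (filter_top_mem hP.1)
    · exact hx d hd h.symm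
  have hFtop : IsFilter ({a : α | a = ⊤}) := by
    refine ⟨⟨⊤, rfl⟩, ?_, ?_⟩
    · rintro a rfl b rfl
      exact rl_top_mul_top
    · rintro a rfl b hb
      exact top_unique hb
  have hdisj : ∀ a ∈ ({a : α | a = ⊤} : Set α), a ∉ D := by
    rintro a rfl
    exact htopD
  obtain ⟨Q, hQ, _, hQD⟩ := exists_prime_disjoint hFtop hDjc hdisj
  refine ⟨Q, hQ, ?_, fun hxQ => hQD x hxQ hDx⟩
  intro q hq
  by_contra hqP
  exact hQD q hq (hDcompl q hqP)

/-- a minimal prime consists of elements with a "complementary" element outside. -/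
lemma minPrime_char {m : Set α} (hm : IsMinPrime m) {x : α} (hx : x ∈ m) :
    ∃ y, y ∉ m ∧ x ⊔ y = ⊤ := by
  by_contra h
  push_neg at h
  have h' : ∀ d, d ∉ m → x ⊔ d ≠ ⊤ := fun d hd => h d hd
  obtain ⟨Q, hQ, hQm, hxQ⟩ := exists_prime_avoiding hm.1 hx h'
  exact hxQ ((hm.2 Q hQ hQm) ▸ hx)

/-- uniqueness half: under `propN`, two minimal primes below a common prime coincide. -/
lemma minPrime_subset_of_propN (hN : propN α) {P m1 m2 : Set α} (hP : IsPrimeFilter P)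
    (hm1 : IsMinPrime m1) (hm2 : IsMinPrime m2) (h1P : m1 ⊆ P) (h2P : m2 ⊆ P) :
    m1 ⊆ m2 := by
  intro x hx
  by_contra hxm2
  obtain ⟨y, hym1, hxy⟩ := minPrime_char hm1 hx
  obtain ⟨a, b, hxa, hyb, hab⟩ := hN x y hxy
  have haP : a ∈ P := by
    rcases hm2.1.2.2 x a (hxa ▸ filter_top_mem hm2.1.1) with h | h
    · exact absurd h hxm2
    · exact h2P h
  have hbP : b ∈ P := by
    rcases hm1.1.2.2 y b (hyb ▸ filter_top_mem hm1.1.1) with h | h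
    · exact absurd h hym1
    · exact h1P h
  have : (⊥ : α) ∈ P := hab ▸ hP.1.2.1 a haP b hbP
  exact filter_proper_bot hP.1 hP.2.1 this

lemma normal_of_propN (hN : propN α) : IsNormalRL α := by
  intro P hP
  obtain ⟨m, hm, hmP⟩ := exists_minPrime_below hP
  refine ⟨m, ⟨hm, hmP⟩, ?_⟩
  rintro m' ⟨hm', hm'P⟩
  exact subset_antisymm (minPrime_subset_of_propN hN hP hm' hm hm'P hmP)
    (minPrime_subset_of_propN hN hP hm hm' hmP hm'P)

lemma propN_of_normal (hnor : IsNormalRL α) : propN α := by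
  intro x y hxy
  by_contra hno
  push_neg at hno
  -- the filter generated by the two coannulets is proper
  have hbot : ⊥ ∉ genTwo x y := by
    rintro ⟨a, b, ha, hb, hab⟩
    exact hno a b ha hb (le_bot_iff.1 hab)
  have hproper : genTwo x y ≠ Set.univ := by
    intro h
    exact hbot (h ▸ trivial)
  obtain ⟨P, hP, hFP⟩ := exists_prime_over (genTwo_filter x y) hproper
  obtain ⟨m, ⟨⟨hm, hmP⟩, huniq⟩⟩ := hnor P hP
  -- x ⊔ y = ⊤ ∈ m, so x ∈ m or y ∈ m
  have hxym : x ⊔ y ∈ m := hxy ▸ filter_top_mem hm.1.1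
  have hcoannP : ∀ z : α, coannulet z ⊆ genTwo x y → z ∈ m → False := by
    intro z hzsub hzm
    have hzP : z ∈ P := hmP hzm
    have hz : ∀ d, d ∉ P → z ⊔ d ≠ ⊤ := by
      intro d hd hzd
      exact hd (hFP (hzsub hzd))
    obtain ⟨Q, hQ, hQP, hzQ⟩ := exists_prime_avoiding hP hzP hz
    obtain ⟨m', hm', hm'Q⟩ := exists_minPrime_below hQ
    have hmm : m' = m := huniq m' ⟨hm', hm'Q.trans hQP⟩
    exact hzQ (hm'Q (hmm ▸ hzm))
  rcases hm.1.2.2 x y hxym with h | h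
  · exact hcoannP x (coannulet_subset_genTwo_left x y) h
  · exact hcoannP y (coannulet_subset_genTwo_right x y) h

end RLAux4
section RLAux5
variable {α : Type*} [ResiduatedLattice α]

open ResiduatedLattice

/-- statement (1) implies propN -/
lemma propN_of_s1
    (h1 : ∀ G H I J : Set α, IsFilter G → IsFilter H →
      IsLatticeIdeal I → IsLatticeIdeal J → G = omegaU I → H = omegaU J →
      omegaU (idealGen (I ∪ J)) = Set.univ → filterGen (G ∪ H) = Set.univ) :
    propN α := by
  intro x y hxy
  have htopgen : (⊤ : α) ∈ idealGen ({a : α | a ≤ x} ∪ {a : α | a ≤ y}) := by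
    intro K hK
    obtain ⟨hKid, hsub⟩ := hK
    have hx : x ∈ K := hsub (Or.inl (le_refl x))
    have hy : y ∈ K := hsub (Or.inr (le_refl y))
    exact hxy ▸ hKid.2.1 x hx y hy
  have huniv : omegaU (idealGen ({a : α | a ≤ x} ∪ {a : α | a ≤ y})) = Set.univ := by
    apply Set.eq_univ_iff_forall.2
    intro c
    exact ⟨⊤, htopgen, top_sup_eq c⟩
  have := h1 (coannulet x) (coannulet y) {a : α | a ≤ x} {a : α | a ≤ y}
    (coannulet_filter x) (coannulet_filter y) (principal_ideal x) (principal_ideal y)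
    (coannulet_eq_omega x) (coannulet_eq_omega y) huniv
  exact extract_of_bot_mem (this ▸ (Set.mem_univ (⊥ : α)))

/-- propN implies statement (1) -/
lemma s1_of_propN (hN : propN α) :
    ∀ G H I J : Set α, IsFilter G → IsFilter H →
      IsLatticeIdeal I → IsLatticeIdeal J → G = omegaU I → H = omegaU J →
      omegaU (idealGen (I ∪ J)) = Set.univ → filterGen (G ∪ H) = Set.univ := by
  intro G H I J hG hH hI hJ hGI hHJ huniv
  -- extract ⊤ ∈ idealGen (I ∪ J)
  have hbot : (⊥ : α) ∈ omegaU (idealGen (I ∪ J)) := huniv ▸ Set.mem_univ _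
  obtain ⟨k, hk, hkbot⟩ := hbot
  have hktop : k = ⊤ := by rwa [sup_bot_eq] at hkbot
  -- idealGen (I ∪ J) is contained in the explicit join ideal
  set K' : Set α := {a : α | ∃ i ∈ I, ∃ j ∈ J, a ≤ i ⊔ j} with hK'
  have hK'id : IsLatticeIdeal K' := by
    obtain ⟨⟨i0, hi0⟩, hIj, hId⟩ := hI
    obtain ⟨⟨j0, hj0⟩, hJj, hJd⟩ := hJ
    refine ⟨⟨⊥, i0, hi0, j0, hj0, bot_le⟩, ?_, ?_⟩
    · rintro a ⟨i, hi, j, hj, hij⟩ b ⟨i', hi', j', hj', hij'⟩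
      refine ⟨i ⊔ i', hIj i hi i' hi', j ⊔ j', hJj j hj j' hj', ?_⟩
      calc a ⊔ b ≤ (i ⊔ j) ⊔ (i' ⊔ j') := sup_le_sup hij hij'
        _ = (i ⊔ i') ⊔ (j ⊔ j') := sup_sup_sup_comm i j i' j'
    · rintro a b hab ⟨i, hi, j, hj, hij⟩
      exact ⟨i, hi, j, hj, le_trans hab hij⟩
  have hsub : idealGen (I ∪ J) ⊆ K' := by
    apply idealGen_subset hK'id
    rintro a (ha | ha)
    · obtain ⟨⟨j0, hj0⟩, _, _⟩ := hJ
      exact ⟨a, ha, j0, hj0, le_sup_left⟩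
    · obtain ⟨⟨i0, hi0⟩, _, _⟩ := hI
      exact ⟨i0, hi0, a, ha, le_sup_right⟩
  obtain ⟨i, hi, j, hj, hij⟩ := hsub hk
  have hijtop : i ⊔ j = ⊤ := top_unique (hktop ▸ hij)
  obtain ⟨a, b, hia, hjb, hab⟩ := hN i j hijtop
  have haG : a ∈ G := hGI ▸ ⟨i, hi, hia⟩
  have hbH : b ∈ H := hHJ ▸ ⟨j, hj, hjb⟩
  -- a * b = ⊥ lies in the generated filter, so it is everything
  have hgen := filterGen_isFilter (G ∪ H)
  have habgen : (⊥ : α) ∈ filterGen (G ∪ H) := by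
    rw [← hab]
    exact hgen.2.1 a (subset_filterGen _ (Or.inl haG)) b (subset_filterGen _ (Or.inr hbH))
  apply Set.eq_univ_iff_forall.2
  intro c
  exact hgen.2.2 ⊥ habgen c bot_le

/-- propN implies statement (5) -/
lemma s5_of_propN (hN : propN α) :
    ∀ x y : α, ∃ z : α, filterGen (coannulet x ∪ coannulet y) = coannulet z := by
  intro x y
  refine ⟨x ⊔ y, subset_antisymm ?_ ?_⟩
  · apply filterGen_subset (coannulet_filter (x ⊔ y))
    rintro a (ha | ha)
    · exact top_unique (by rw [← ha]; exact sup_le_sup_right le_sup_left a)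
    · exact top_unique (by rw [← ha]; exact sup_le_sup_right le_sup_right a)
  · intro c hc
    have hc' : (x ⊔ c) ⊔ (y ⊔ c) = ⊤ := by
      rw [sup_sup_sup_comm, sup_idem]; exact hc
    obtain ⟨a, b, hxa, hyb, hab⟩ := hN (x ⊔ c) (y ⊔ c) hc'
    have h1 : c ⊔ a ∈ coannulet x := by
      show x ⊔ (c ⊔ a) = ⊤
      rw [← sup_assoc]; exact hxa
    have h2 : c ⊔ b ∈ coannulet y := by
      show y ⊔ (c ⊔ b) = ⊤
      rw [← sup_assoc]; exact hyb
    have hgen := filterGen_isFilter (coannulet x ∪ coannulet y)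
    have hmul : (c ⊔ a) * (c ⊔ b) ∈ filterGen (coannulet x ∪ coannulet y) :=
      hgen.2.1 _ (subset_filterGen _ (Or.inl h1)) _ (subset_filterGen _ (Or.inr h2))
    have hle : (c ⊔ a) * (c ⊔ b) ≤ c := by
      calc (c ⊔ a) * (c ⊔ b) ≤ c ⊔ a * b := rl_sup_mul_sup_le c a b
        _ = c := by rw [hab, sup_bot_eq]
    exact hgen.2.2 _ hmul c hle

/-- statement (5) implies propN -/
lemma propN_of_s5
    (h5 : ∀ x y : α, ∃ z : α, filterGen (coannulet x ∪ coannulet y) = coannulet z) :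
    propN α := by
  intro x y hxy
  obtain ⟨z, hz⟩ := h5 x y
  have hxz : x ∈ coannulet z := by
    rw [← hz]
    exact subset_filterGen _ (Or.inr (show y ⊔ x = ⊤ by rw [sup_comm]; exact hxy))
  have hzx : z ∈ coannulet x := by
    show x ⊔ z = ⊤
    rw [sup_comm]; exact hxz
  have hzz : z ∈ coannulet z := by
    rw [← hz]
    exact subset_filterGen _ (Or.inl hzx)
  have hztop : z = ⊤ := by
    have : z ⊔ z = ⊤ := hzz
    rwa [sup_idem] at this
  have hbot : (⊥ : α) ∈ coannulet z := by
    show z ⊔ ⊥ = ⊤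
    rw [sup_bot_eq]; exact hztop
  rw [← hz] at hbot
  exact extract_of_bot_mem hbot

/-- statement (4) implies propN -/
lemma propN_of_s4
    (h4 : ∀ G H : Set α, IsOmegaF G → IsOmegaF H → IsOmegaF (filterGen (G ∪ H))) :
    propN α := by
  intro x y hxy
  obtain ⟨hfil, K, hKid, hKeq⟩ := h4 (coannulet x) (coannulet y)
    (coannulet_omegaF x) (coannulet_omegaF y)
  have hxmem : x ∈ filterGen (coannulet x ∪ coannulet y) :=
    subset_filterGen _ (Or.inr (show y ⊔ x = ⊤ by rw [sup_comm]; exact hxy))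
  rw [hKeq] at hxmem
  obtain ⟨k, hk, hkx⟩ := hxmem
  have hkmem : k ∈ filterGen (coannulet x ∪ coannulet y) :=
    subset_filterGen _ (Or.inl (show x ⊔ k = ⊤ by rw [sup_comm]; exact hkx))
  rw [hKeq] at hkmem
  obtain ⟨k', hk', hk'k⟩ := hkmem
  have htopK : (⊤ : α) ∈ K := hk'k ▸ hKid.2.1 k' hk' k hk
  have hbot : (⊥ : α) ∈ omegaU K := ⟨⊤, htopK, top_sup_eq ⊥⟩
  rw [← hKeq] at hbot
  exact extract_of_bot_mem hbot

end RLAux5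
section RLAux6
variable {α : Type*} [ResiduatedLattice α]

open ResiduatedLattice

/-- finite join of a list. -/
def lsup : List α → α
  | [] => ⊥
  | a :: l => a ⊔ lsup l

lemma lsup_append (l1 l2 : List α) : lsup (l1 ++ l2) = lsup l1 ⊔ lsup l2 := by
  induction l1 with
  | nil => simp [lsup]
  | cons a l ih =>
    show a ⊔ lsup (l ++ l2) = (a ⊔ lsup l) ⊔ lsup l2
    rw [ih, sup_assoc]

/-- the witness ideal for the join of a family of ω-filters. -/
def famIdeal (𝔉 : Set (Set α)) : Set α :=
  {a : α | ∃ l : List α,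
    (∀ i ∈ l, ∃ H ∈ 𝔉, ∃ I : Set α, IsLatticeIdeal I ∧ H = omegaU I ∧ i ∈ I) ∧ a ≤ lsup l}

lemma famIdeal_isIdeal (𝔉 : Set (Set α)) : IsLatticeIdeal (famIdeal 𝔉) := by
  refine ⟨⟨⊥, [], by simp, le_refl _⟩, ?_, ?_⟩
  · rintro a ⟨l1, hl1, ha⟩ b ⟨l2, hl2, hb⟩
    refine ⟨l1 ++ l2, ?_, ?_⟩
    · intro i hi
      rcases List.mem_append.1 hi with h | h
      exacts [hl1 i h, hl2 i h]
    · rw [lsup_append]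
      exact sup_le_sup ha hb
  · rintro a b hab ⟨l, hl, hb⟩
    exact ⟨l, hl, le_trans hab hb⟩

lemma mem_famIdeal {𝔉 : Set (Set α)} {H I : Set α} (hH : H ∈ 𝔉)
    (hI : IsLatticeIdeal I) (hHI : H = omegaU I) {i : α} (hi : i ∈ I) : i ∈ famIdeal 𝔉 := by
  refine ⟨[i], ?_, le_sup_left⟩
  intro j hj
  rw [List.mem_singleton] at hj
  subst hj
  exact ⟨H, hH, I, hI, hHI, hi⟩

/-- the key induction: under propN, anything complemented by a finite join of ideal
elements lies in the generated filter. -/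
lemma famIdeal_key (hN : propN α) (𝔉 : Set (Set α)) :
    ∀ l : List α,
      (∀ i ∈ l, ∃ H ∈ 𝔉, ∃ I : Set α, IsLatticeIdeal I ∧ H = omegaU I ∧ i ∈ I) →
      ∀ a : α, lsup l ⊔ a = ⊤ → a ∈ filterGen (⋃₀ 𝔉) := by
  intro l
  induction l with
  | nil =>
    intro _ a ha
    have : a = ⊤ := by rwa [show lsup ([] : List α) = ⊥ from rfl, bot_sup_eq] at ha
    exact this ▸ filter_top_mem (filterGen_isFilter _)
  | cons i l ih =>
    intro hl a ha
    have hil : lsup (i :: l) = i ⊔ lsup l := rfl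
    rw [hil] at ha
    -- (i ⊔ a) ⊔ (lsup l ⊔ a) = ⊤
    have hsplit : (i ⊔ a) ⊔ (lsup l ⊔ a) = ⊤ := by
      rw [sup_sup_sup_comm, sup_idem]
      exact ha
    obtain ⟨c, d, hic, hld, hcd⟩ := hN (i ⊔ a) (lsup l ⊔ a) hsplit
    obtain ⟨H, hH, I, hI, hHI, hiI⟩ := hl i (List.mem_cons_self : i ∈ i :: l)
    have hgen := filterGen_isFilter (⋃₀ 𝔉)
    -- a ⊔ c ∈ H
    have h1 : a ⊔ c ∈ filterGen (⋃₀ 𝔉) := by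
      apply subset_filterGen
      refine ⟨H, hH, ?_⟩
      rw [hHI]
      exact ⟨i, hiI, by rw [← sup_assoc]; exact hic⟩
    -- a ⊔ d by induction
    have h2 : a ⊔ d ∈ filterGen (⋃₀ 𝔉) := by
      apply ih (fun j hj => hl j (List.mem_cons_of_mem i hj))
      rw [← sup_assoc]
      exact hld
    have hmul : (a ⊔ c) * (a ⊔ d) ∈ filterGen (⋃₀ 𝔉) := hgen.2.1 _ h1 _ h2
    have hle : (a ⊔ c) * (a ⊔ d) ≤ a := by
      calc (a ⊔ c) * (a ⊔ d) ≤ a ⊔ c * d := rl_sup_mul_sup_le a c d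
        _ = a := by rw [hcd, sup_bot_eq]
    exact hgen.2.2 _ hmul a hle

/-- propN implies statement (3) -/
lemma s3_of_propN (hN : propN α) :
    ∀ 𝔉 : Set (Set α), (∀ H ∈ 𝔉, IsOmegaF H) → IsOmegaF (filterGen (⋃₀ 𝔉)) := by
  intro 𝔉 h𝔉
  refine ⟨filterGen_isFilter _, famIdeal 𝔉, famIdeal_isIdeal 𝔉, subset_antisymm ?_ ?_⟩
  · -- filterGen (⋃₀ 𝔉) ⊆ omegaU (famIdeal 𝔉)
    apply filterGen_subset (omega_isFilter (famIdeal_isIdeal 𝔉))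
    rintro a ⟨H, hH, haH⟩
    obtain ⟨hHfil, I, hI, hHI⟩ := h𝔉 H hH
    rw [hHI] at haH
    obtain ⟨i, hiI, hia⟩ := haH
    exact ⟨i, mem_famIdeal hH hI hHI hiI, hia⟩
  · -- omegaU (famIdeal 𝔉) ⊆ filterGen (⋃₀ 𝔉)
    rintro a ⟨k, ⟨l, hl, hkl⟩, hka⟩
    apply famIdeal_key hN 𝔉 l hl a
    exact top_unique (by rw [← hka]; exact sup_le_sup_right hkl a)

/-- statement (3) implies statement (4) -/
lemma s4_of_s3
    (h3 : ∀ 𝔉 : Set (Set α), (∀ H ∈ 𝔉, IsOmegaF H) → IsOmegaF (filterGen (⋃₀ 𝔉))) :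
    ∀ G H : Set α, IsOmegaF G → IsOmegaF H → IsOmegaF (filterGen (G ∪ H)) := by
  intro G H hG hH
  have := h3 {G, H} (by rintro K (rfl | rfl); exacts [hG, hH])
  rwa [Set.sUnion_pair] at this

end RLAux6
/-- Proposition 4.7: the five characterizations of normality in terms of
`ω`-filters and coannulets are equivalent. -/
theorem stmt_19 (α : Type*) [ResiduatedLattice α] :
    List.TFAE [
      (∀ G H I J : Set α, IsFilter G → IsFilter H →
        IsLatticeIdeal I → IsLatticeIdeal J → G = omegaU I → H = omegaU J →
        omegaU (idealGen (I ∪ J)) = Set.univ → filterGen (G ∪ H) = Set.univ),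
      IsNormalRL α,
      (∀ 𝔉 : Set (Set α), (∀ H ∈ 𝔉, IsOmegaF H) → IsOmegaF (filterGen (⋃₀ 𝔉))),
      (∀ G H : Set α, IsOmegaF G → IsOmegaF H → IsOmegaF (filterGen (G ∪ H))),
      (∀ x y : α, ∃ z : α, filterGen (coannulet x ∪ coannulet y) = coannulet z) ] := by
  tfae_have 1 → 2 := fun h => normal_of_propN (propN_of_s1 h)
  tfae_have 2 → 3 := fun h => s3_of_propN (propN_of_normal h)
  tfae_have 3 → 4 := fun h => s4_of_s3 h
  tfae_have 4 → 5 := fun h => s5_of_propN (propN_of_s4 h)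
  tfae_have 5 → 1 := fun h => s1_of_propN (propN_of_s5 h)
  tfae_finish
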